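/- There is a universal constant C such that the following holds for all d ≥ 2. Fix γ ≤ 0.1 and 1/d ≤ ρ ≤ 0.1·√d, and let R₃ be the set of symmetric matrices M ∈ ℝ^{d×d} with ‖M‖_op ≤ γ and ‖M‖_F ≤ ρ. Then for every integer 1 ≤ ℓ ≤ d, there exists a finite set B of symmetric d×d matrices with |B| ≤ e^{C·ℓ·d·log d} such that for every M ∈ R₃ there exists B ∈ B with ‖M − B‖_op ≤ 2ρ/√ℓ. -/

import Mathlib

open MeasureTheory ProbabilityTheory Matrix Real
open scoped ENNReal

noncomputable section

/-- The `ℓ²`-operator norm of a real `d × d` matrix. -/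
def opNorm {d : ℕ} (M : Matrix (Fin d) (Fin d) ℝ) : ℝ :=
  ‖(Matrix.toEuclideanCLM (𝕜 := ℝ) M)‖

/-- The Frobenius norm of a real `d × d` matrix. -/
def frobNorm {d : ℕ} (M : Matrix (Fin d) (Fin d) ℝ) : ℝ :=
  Real.sqrt (∑ i, ∑ j, (M i j) ^ 2)

/-- The Euclidean norm of a vector in `ℝ^d`. -/
def vnorm {d : ℕ} (v : Fin d → ℝ) : ℝ := Real.sqrt (∑ i, (v i) ^ 2)

/-- The positive semidefinite square root of a matrix (junk value `0` if the matrix is not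
positive semidefinite). -/
def msqrt {d : ℕ} (S : Matrix (Fin d) (Fin d) ℝ) : Matrix (Fin d) (Fin d) ℝ :=
  letI := Classical.propDecidable S.PosSemidef
  if h : S.PosSemidef then
    (h.1.eigenvectorUnitary : Matrix (Fin d) (Fin d) ℝ) * diagonal (Real.sqrt ∘ h.1.eigenvalues) *
      (star h.1.eigenvectorUnitary : Matrix (Fin d) (Fin d) ℝ) else 0

/-- `Σ^{-1/2}`, the inverse of the positive square root. -/
def sqrtInv {d : ℕ} (S : Matrix (Fin d) (Fin d) ℝ) : Matrix (Fin d) (Fin d) ℝ :=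
  (msqrt S)⁻¹

/-- `(μ̂, Σ̂) ≈_{γ,ρ,τ} (μ, Σ)`: spectral, Frobenius, and Mahalanobis closeness. -/
def approx {d : ℕ} (γ ρ τ : ℝ) (p q : (Fin d → ℝ) × Matrix (Fin d) (Fin d) ℝ) : Prop :=
  opNorm (sqrtInv q.2 * p.2 * sqrtInv q.2 - 1) ≤ γ ∧
  frobNorm (sqrtInv q.2 * p.2 * sqrtInv q.2 - 1) ≤ ρ ∧
  vnorm (sqrtInv q.2 *ᵥ (p.1 - q.1)) ≤ τ

namespace FBNAux

lemma vnorm_nonneg {d : ℕ} (v : Fin d → ℝ) : 0 ≤ vnorm v := Real.sqrt_nonneg _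

lemma vnorm_eq_norm {d : ℕ} (v : Fin d → ℝ) :
    vnorm v = ‖(WithLp.equiv 2 (Fin d → ℝ)).symm v‖ := by
  rw [EuclideanSpace.norm_eq]; simp [vnorm, sq_abs]

lemma vnorm_triangle {d : ℕ} (u v : Fin d → ℝ) : vnorm (u + v) ≤ vnorm u + vnorm v := by
  simp only [vnorm_eq_norm]
  rw [show (WithLp.equiv 2 (Fin d → ℝ)).symm (u + v) =
    (WithLp.equiv 2 (Fin d → ℝ)).symm u + (WithLp.equiv 2 (Fin d → ℝ)).symm v from rfl]
  exact norm_add_le _ _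

lemma vnorm_smul {d : ℕ} (c : ℝ) (v : Fin d → ℝ) : vnorm (c • v) = |c| * vnorm v := by
  unfold vnorm
  rw [← Real.sqrt_sq (abs_nonneg c), ← Real.sqrt_mul (by positivity), sq_abs, Finset.mul_sum]
  congr 1
  exact Finset.sum_congr rfl fun i _ => by simp [mul_pow]

lemma opNorm_le_bound {d : ℕ} {M : Matrix (Fin d) (Fin d) ℝ} {c : ℝ} (hc : 0 ≤ c)
    (h : ∀ x : Fin d → ℝ, vnorm (M *ᵥ x) ≤ c * vnorm x) : opNorm M ≤ c := by
  apply ContinuousLinearMap.opNorm_le_bound _ hc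
  intro x
  have hx : x = (WithLp.equiv 2 (Fin d → ℝ)).symm (WithLp.equiv 2 (Fin d → ℝ) x) := rfl
  rw [hx, show (Matrix.toEuclideanCLM (𝕜 := ℝ) M) ((WithLp.equiv 2 (Fin d → ℝ)).symm (WithLp.equiv 2 (Fin d → ℝ) x)) = (WithLp.equiv 2 (Fin d → ℝ)).symm (M *ᵥ WithLp.equiv 2 (Fin d → ℝ) x) from rfl, ← vnorm_eq_norm, ← vnorm_eq_norm]
  exact h _

lemma opNorm_add_le {d : ℕ} (A B : Matrix (Fin d) (Fin d) ℝ) :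
    opNorm (A + B) ≤ opNorm A + opNorm B := by
  unfold opNorm; rw [map_add]; exact norm_add_le _ _

lemma opNorm_sum_le {d n : ℕ} (f : Fin n → Matrix (Fin d) (Fin d) ℝ) :
    opNorm (∑ i, f i) ≤ ∑ i, opNorm (f i) := by
  unfold opNorm; rw [map_sum]; exact norm_sum_le _ _

lemma sumsq_mulVec {d : ℕ} {U : Matrix (Fin d) (Fin d) ℝ} (hU : Uᵀ * U = 1)
    (y : Fin d → ℝ) : ∑ i, ((U *ᵥ y) i) ^ 2 = ∑ i, (y i) ^ 2 := by
  have key : ∀ j k, (∑ i, U i j * U i k) = (1 : Matrix (Fin d) (Fin d) ℝ) j k := by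
    intro j k; rw [← hU]; simp [Matrix.mul_apply]
  calc ∑ i, ((U *ᵥ y) i) ^ 2
      = ∑ i, ∑ j, ∑ k, (U i j * y j) * (U i k * y k) := by
        simp only [mulVec, dotProduct, sq, Finset.sum_mul_sum]
    _ = ∑ j, ∑ k, (y j * y k) * ∑ i, U i j * U i k := by
        rw [Finset.sum_comm]
        refine Finset.sum_congr rfl fun j _ => ?_
        rw [Finset.sum_comm]
        refine Finset.sum_congr rfl fun k _ => ?_
        rw [Finset.mul_sum]
        refine Finset.sum_congr rfl fun i _ => by ring
    _ = ∑ j, (y j) ^ 2 := by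
        simp only [key, Matrix.one_apply]
        simp [Finset.sum_ite_eq, sq]

lemma vnorm_mulVec_unitary {d : ℕ} {U : Matrix (Fin d) (Fin d) ℝ} (hU : Uᵀ * U = 1)
    (y : Fin d → ℝ) : vnorm (U *ᵥ y) = vnorm y := by
  unfold vnorm; rw [sumsq_mulVec hU]

lemma vnorm_diag_le {d : ℕ} {w : Fin d → ℝ} {t : ℝ} (ht : 0 ≤ t) (hw : ∀ i, |w i| ≤ t)
    (y : Fin d → ℝ) : vnorm (Matrix.diagonal w *ᵥ y) ≤ t * vnorm y := by
  unfold vnorm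
  rw [← Real.sqrt_sq ht, ← Real.sqrt_mul (by positivity)]
  apply Real.sqrt_le_sqrt
  rw [Finset.mul_sum]
  refine Finset.sum_le_sum fun i _ => ?_
  have hdiag : (Matrix.diagonal w *ᵥ y) i = w i * y i := by
    simp [mulVec, dotProduct, Matrix.diagonal]
  rw [hdiag, mul_pow]
  have h1 : (w i)^2 ≤ t^2 := by
    rw [← sq_abs]; exact pow_le_pow_left₀ (abs_nonneg _) (hw i) 2
  nlinarith [sq_nonneg (y i)]

lemma opNorm_conj_diag_le {d : ℕ} {U : Matrix (Fin d) (Fin d) ℝ} {w : Fin d → ℝ} {t : ℝ}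
    (hUtU : Uᵀ * U = 1) (hUUt : U * Uᵀ = 1) (ht : 0 ≤ t) (hw : ∀ i, |w i| ≤ t) :
    opNorm (U * Matrix.diagonal w * Uᵀ) ≤ t := by
  apply opNorm_le_bound ht
  intro x
  have h1 : (U * Matrix.diagonal w * Uᵀ) *ᵥ x = U *ᵥ (Matrix.diagonal w *ᵥ (Uᵀ *ᵥ x)) := by
    rw [Matrix.mulVec_mulVec, Matrix.mulVec_mulVec]
  have hUt : (Uᵀ)ᵀ * Uᵀ = 1 := by rwa [Matrix.transpose_transpose]
  rw [h1, vnorm_mulVec_unitary hUtU]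
  calc vnorm (Matrix.diagonal w *ᵥ (Uᵀ *ᵥ x)) ≤ t * vnorm (Uᵀ *ᵥ x) :=
        vnorm_diag_le ht hw _
    _ = t * vnorm x := by rw [vnorm_mulVec_unitary hUt]

lemma isHermitian_of_isSymm {d : ℕ} {M : Matrix (Fin d) (Fin d) ℝ} (hM : M.IsSymm) :
    M.IsHermitian := by
  rw [Matrix.IsHermitian, Matrix.conjTranspose_eq_transpose_of_trivial]; exact hM

lemma spec_decomp {d : ℕ} (U : Matrix (Fin d) (Fin d) ℝ) (w : Fin d → ℝ) :
    U * diagonal w * Uᵀ = ∑ i, vecMulVec (w i • (fun a => U a i)) (fun a => U a i) := by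
  ext a b
  simp only [Matrix.sum_apply, vecMulVec_apply, Matrix.mul_apply, Matrix.diagonal,
    Matrix.transpose_apply, Pi.smul_apply, smul_eq_mul, Matrix.of_apply]
  simp only [mul_ite, mul_zero, Finset.sum_ite_eq', Finset.mem_univ, if_true]
  exact Finset.sum_congr rfl fun i _ => by ring

lemma trace_sq {d : ℕ} {M U : Matrix (Fin d) (Fin d) ℝ} {w : Fin d → ℝ}
    (hM : M.IsSymm) (hU : Uᵀ * U = 1) (hspec : M = U * diagonal w * Uᵀ) :
    ∑ i, (w i) ^ 2 = ∑ i, ∑ j, (M i j) ^ 2 := by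
  have h1 : M * M = U * (diagonal w * diagonal w) * Uᵀ := by
    rw [hspec]
    have e1 : (U * diagonal w * Uᵀ) * (U * diagonal w * Uᵀ)
        = U * diagonal w * ((Uᵀ * U) * (diagonal w * Uᵀ)) := by
      simp only [Matrix.mul_assoc]
    rw [e1, hU, Matrix.one_mul]
    simp only [Matrix.mul_assoc]
  have h2 : (M * M).trace = ∑ i, (w i)^2 := by
    rw [h1, Matrix.trace_mul_cycle, ← Matrix.mul_assoc, hU, Matrix.one_mul,
      Matrix.diagonal_mul_diagonal, Matrix.trace_diagonal]
    exact Finset.sum_congr rfl fun i _ => (sq (w i)).symm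
  have h3 : (M * M).trace = ∑ i, ∑ j, (M i j)^2 := by
    rw [Matrix.trace]
    refine Finset.sum_congr rfl fun i _ => ?_
    simp only [Matrix.diag_apply, Matrix.mul_apply]
    refine Finset.sum_congr rfl fun j _ => ?_
    have hsym : M j i = M i j := (congrFun (congrFun hM j) i).symm
    rw [hsym, sq]
  rw [← h2, h3]

lemma opNorm_vecMulVec {d : ℕ} (x y : Fin d → ℝ) :
    opNorm (vecMulVec x y) ≤ vnorm x * vnorm y := by
  have hnn : (0:ℝ) ≤ vnorm x * vnorm y :=
    mul_nonneg (Real.sqrt_nonneg _) (Real.sqrt_nonneg _)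
  apply opNorm_le_bound hnn
  intro z
  have h1 : vecMulVec x y *ᵥ z = (∑ j, y j * z j) • x := by
    funext i; simp [vecMulVec_apply, mulVec, dotProduct, Finset.mul_sum, Finset.sum_mul]
    exact Finset.sum_congr rfl fun j _ => by ring
  rw [h1, vnorm_smul]
  have h3 : |∑ j, y j * z j| ≤ vnorm y * vnorm z := by
    unfold vnorm
    rw [← Real.sqrt_mul (by positivity), ← Real.sqrt_sq_eq_abs]
    exact Real.sqrt_le_sqrt (Finset.sum_mul_sq_le_sq_mul_sq Finset.univ y z)
  calc |∑ j, y j * z j| * vnorm x ≤ (vnorm y * vnorm z) * vnorm x :=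
        mul_le_mul_of_nonneg_right h3 (Real.sqrt_nonneg _)
    _ = vnorm x * vnorm y * vnorm z := by ring

lemma exists_top {d : ℕ} (f : Fin d → ℝ) : ∀ ℓ : ℕ, ℓ ≤ d →
    ∃ S : Finset (Fin d), S.card = ℓ ∧ ∀ i ∉ S, ∀ j ∈ S, f i ≤ f j := by
  intro ℓ
  induction ℓ with
  | zero => exact fun _ => ⟨∅, rfl, by simp⟩
  | succ n ih =>
    intro hld
    obtain ⟨S, hcard, hS⟩ := ih (Nat.le_of_succ_le hld)
    have hne : (Finset.univ \ S).Nonempty := by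
      rw [← Finset.card_pos, Finset.card_sdiff_of_subset (Finset.subset_univ S)]
      simp only [Finset.card_univ, Fintype.card_fin, hcard]
      omega
    obtain ⟨i₀, hi₀, hmax⟩ := Finset.exists_max_image _ f hne
    have hi₀S : i₀ ∉ S := (Finset.mem_sdiff.mp hi₀).2
    refine ⟨insert i₀ S, ?_, ?_⟩
    · rw [Finset.card_insert_of_notMem hi₀S, hcard]
    · intro i hi j hj
      have hiS : i ∉ S := fun h => hi (Finset.mem_insert_of_mem h)
      rcases Finset.mem_insert.mp hj with rfl | hjS
      · exact hmax i (Finset.mem_sdiff.mpr ⟨Finset.mem_univ _, hiS⟩)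
      · exact hS i hiS j hjS

lemma round_close (h x : ℝ) (hh : 0 < h) : |x - (round (x / h) : ℝ) * h| ≤ h / 2 := by
  have hr := abs_sub_round (x / h)
  have e : x - (round (x/h) : ℝ) * h = (x / h - round (x / h)) * h := by
    field_simp
  rw [e, abs_mul, abs_of_pos hh]
  calc |x/h - round (x/h)| * h ≤ (1/2) * h := by
        apply mul_le_mul_of_nonneg_right hr hh.le
    _ = h / 2 := by ring

lemma round_mem_Icc {x : ℝ} {b : ℝ} (N : ℤ) (hx : |x| ≤ b) (hb : b + 1/2 < (N:ℝ) + 1) :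
    round x ∈ Finset.Icc (-N) N := by
  have h1 : |(round x : ℝ)| ≤ b + 1/2 := by
    have hr := abs_sub_round x
    calc |(round x:ℝ)| ≤ |x| + |(round x:ℝ) - x| := by
          have := abs_add_le x ((round x:ℝ) - x); simpa using this
      _ ≤ b + 1/2 := by rw [abs_sub_comm]; linarith
  have h2 : |(round x : ℝ)| < (N:ℝ) + 1 := lt_of_le_of_lt h1 hb
  have h3 : |round x| < N + 1 := by
    exact_mod_cast (by push_cast; exact h2 : |(round x:ℝ)| < ((N+1 : ℤ):ℝ))
  rw [Finset.mem_Icc]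
  constructor
  · nlinarith [neg_abs_le (round x)]
  · nlinarith [le_abs_self (round x)]

def gridZ (N : ℤ) (h : ℝ) : Finset ℝ := (Finset.Icc (-N) N).image (fun k : ℤ => (k:ℝ) * h)

lemma gridZ_card (N : ℕ) (h : ℝ) : (gridZ N h).card ≤ 2*N+1 := by
  unfold gridZ
  apply le_trans Finset.card_image_le
  rw [Int.card_Icc]
  have e : ((N:ℤ) + 1 - -(N:ℤ)) = ((2*N+1 : ℕ) : ℤ) := by push_cast; ring
  rw [e, Int.toNat_natCast]

lemma mem_gridZ {N : ℕ} {h x b : ℝ} (hh : 0 < h) (hx : |x| ≤ b)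
    (hb : b/h + 1/2 < (N:ℝ) + 1) : (round (x/h) : ℝ) * h ∈ gridZ N h := by
  unfold gridZ
  rw [Finset.mem_image]
  refine ⟨round (x/h), ?_, rfl⟩
  apply round_mem_Icc (N:ℤ) (b := b/h) _ (by push_cast; exact hb)
  rw [abs_div, abs_of_pos hh]
  gcongr

lemma piProd_card (d l : ℕ) (Ga Gc : Finset ℝ) (hd : (0:ℝ) < d)
    (c1 : (Ga.card : ℝ) ≤ (d:ℝ)^9) (c2 : (Gc.card : ℝ) ≤ (d:ℝ)^9) :
    ((Fintype.piFinset (fun _ : Fin l => Ga ×ˢ Fintype.piFinset (fun _ : Fin d => Gc))).card : ℝ)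
      ≤ ((d:ℝ)^9 * ((d:ℝ)^9)^d)^l := by
  rw [Fintype.card_piFinset]
  simp only [Finset.card_product, Fintype.card_piFinset, Finset.prod_const,
    Finset.card_univ, Fintype.card_fin]
  push_cast
  apply pow_le_pow_left₀ (by positivity)
  exact mul_le_mul c1 (pow_le_pow_left₀ (by positivity) c2 d) (by positivity) (by positivity)

end FBNAux

open FBNAux

set_option maxHeartbeats 2000000 in
/-- Lemma: operator-norm net for symmetric matrices with bounded operator and
Frobenius norms. -/
theorem frobenius_ball_net :
    ∃ C > (0 : ℝ), ∀ d : ℕ, 2 ≤ d → ∀ γ ρ : ℝ, 0 < γ → γ ≤ 0.1 →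
      1 / (d : ℝ) ≤ ρ → ρ ≤ 0.1 * Real.sqrt d →
      ∀ ℓ : ℕ, 1 ≤ ℓ → ℓ ≤ d →
      ∃ B : Finset (Matrix (Fin d) (Fin d) ℝ),
        (∀ M ∈ B, M.IsSymm) ∧
        (B.card : ℝ) ≤ Real.exp (C * ℓ * d * Real.log d) ∧
        ∀ M : Matrix (Fin d) (Fin d) ℝ, M.IsSymm → opNorm M ≤ γ → frobNorm M ≤ ρ →
          ∃ B₀ ∈ B, opNorm (M - B₀) ≤ 2 * ρ / Real.sqrt ℓ := by
  refine ⟨18, by norm_num, ?_⟩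
  intro d hd γ ρ hγ0 hγ1 hρ1 hρ2 ℓ hl1 hld
  have hD0 : (0:ℝ) < d := by positivity
  have hD2 : (2:ℝ) ≤ d := by exact_mod_cast hd
  have hD1 : (1:ℝ) ≤ d := by linarith
  have hρ0 : 0 < ρ := lt_of_lt_of_le (by positivity) hρ1
  have hsd : Real.sqrt d ≤ d := by
    have h := Real.sqrt_le_sqrt (show (d:ℝ) ≤ (d:ℝ)^2 by nlinarith)
    rwa [Real.sqrt_sq hD0.le] at h
  have hρd : ρ ≤ (d:ℝ) := by
    calc ρ ≤ 0.1 * Real.sqrt d := hρ2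
      _ ≤ 0.1 * d := by nlinarith [Real.sqrt_nonneg (d:ℝ)]
      _ ≤ d := by nlinarith
  -- the grids
  have hd5 : (0:ℝ) < 1/(d:ℝ)^5 := by positivity
  have hd7 : (0:ℝ) < 1/(d:ℝ)^7 := by positivity
  have h8d3 : (8:ℝ) ≤ (d:ℝ)^3 := by
    have h := pow_le_pow_left₀ (by norm_num : (0:ℝ) ≤ 2) hD2 3
    norm_num at h; exact h
  have h4d2 : (4:ℝ) ≤ (d:ℝ)^2 := by
    have h := pow_le_pow_left₀ (by norm_num : (0:ℝ) ≤ 2) hD2 2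
    norm_num at h; exact h
  have h1d6 : (1:ℝ) ≤ (d:ℝ)^6 := one_le_pow₀ hD1
  have h1d7 : (1:ℝ) ≤ (d:ℝ)^7 := one_le_pow₀ hD1
  set Ga : Finset ℝ := gridZ ((d^6 : ℕ) : ℤ) (1/(d:ℝ)^5) with hGa
  set Gc : Finset ℝ := gridZ ((d^7 : ℕ) : ℤ) (1/(d:ℝ)^7) with hGc
  set P : Finset (Fin ℓ → ℝ × (Fin d → ℝ)) :=
    Fintype.piFinset (fun _ => Ga ×ˢ Fintype.piFinset (fun _ : Fin d => Gc)) with hP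
  set net : (Fin ℓ → ℝ × (Fin d → ℝ)) → Matrix (Fin d) (Fin d) ℝ :=
    (fun p => ∑ k, vecMulVec ((p k).1 • (p k).2) ((p k).2)) with hnet
  have c1 : (Ga.card : ℝ) ≤ (d:ℝ)^9 := by
    have h := gridZ_card (d^6) (1/(d:ℝ)^5)
    have h' : (Ga.card : ℝ) ≤ 2*(d:ℝ)^6+1 := by rw [hGa]; exact_mod_cast h
    have e1 : 2*(d:ℝ)^6+1 ≤ 8*(d:ℝ)^6 := by linarith
    have e2 : 8*(d:ℝ)^6 ≤ (d:ℝ)^3*(d:ℝ)^6 :=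
      mul_le_mul_of_nonneg_right h8d3 (by positivity)
    calc (Ga.card : ℝ) ≤ 8*(d:ℝ)^6 := le_trans h' e1
      _ ≤ (d:ℝ)^3*(d:ℝ)^6 := e2
      _ = (d:ℝ)^9 := by ring
  have c2 : (Gc.card : ℝ) ≤ (d:ℝ)^9 := by
    have h := gridZ_card (d^7) (1/(d:ℝ)^7)
    have h' : (Gc.card : ℝ) ≤ 2*(d:ℝ)^7+1 := by rw [hGc]; exact_mod_cast h
    have e1 : 2*(d:ℝ)^7+1 ≤ 4*(d:ℝ)^7 := by linarith
    have e2 : 4*(d:ℝ)^7 ≤ (d:ℝ)^2*(d:ℝ)^7 :=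
      mul_le_mul_of_nonneg_right h4d2 (by positivity)
    calc (Gc.card : ℝ) ≤ 4*(d:ℝ)^7 := le_trans h' e1
      _ ≤ (d:ℝ)^2*(d:ℝ)^7 := e2
      _ = (d:ℝ)^9 := by ring
  refine ⟨P.image net, ?_, ?_, ?_⟩
  · -- symmetry
    intro M hMmem
    obtain ⟨p, _, rfl⟩ := Finset.mem_image.mp hMmem
    show (net p)ᵀ = net p
    ext i j
    simp only [hnet, Matrix.transpose_apply, Matrix.sum_apply, vecMulVec_apply,
      Pi.smul_apply, smul_eq_mul]
    exact Finset.sum_congr rfl fun k _ => by ring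
  · -- cardinality
    have hcard : ((P.image net).card : ℝ) ≤ ((d:ℝ)^9 * ((d:ℝ)^9)^d)^ℓ := by
      calc ((P.image net).card : ℝ) ≤ (P.card : ℝ) := by exact_mod_cast Finset.card_image_le
        _ ≤ _ := piProd_card d ℓ Ga Gc hD0 c1 c2
    apply le_trans hcard
    have e1 : ((d:ℝ)^9 * ((d:ℝ)^9)^d)^ℓ = (d:ℝ)^((9 + 9*d)*ℓ) := by
      rw [← pow_mul, ← pow_add, ← pow_mul]
    have e2 : (d:ℝ)^((9 + 9*d)*ℓ) ≤ (d:ℝ)^(18*d*ℓ) := by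
      apply pow_le_pow_right₀ hD1
      have h9 : 9 + 9*d ≤ 18*d := by omega
      exact Nat.mul_le_mul_right ℓ h9
    rw [e1]
    apply le_trans e2
    conv_lhs => rw [show (d:ℝ) = Real.exp (Real.log d) from (Real.exp_log hD0).symm]
    rw [← Real.exp_nat_mul]
    apply Real.exp_le_exp.mpr
    apply le_of_eq
    push_cast
    ring
  · -- approximation
    intro M hMsymm hMop hMfrob
    have hH : M.IsHermitian := isHermitian_of_isSymm hMsymm
    set U : Matrix (Fin d) (Fin d) ℝ := (hH.eigenvectorUnitary : Matrix (Fin d) (Fin d) ℝ)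
      with hU
    set lam : Fin d → ℝ := hH.eigenvalues with hlam
    have hUtU : Uᵀ * U = 1 := by
      rw [hU, ← Matrix.conjTranspose_eq_transpose_of_trivial]
      exact Unitary.coe_star_mul_self hH.eigenvectorUnitary
    have hUUt : U * Uᵀ = 1 := by
      rw [hU, ← Matrix.conjTranspose_eq_transpose_of_trivial]
      exact Unitary.coe_mul_star_self hH.eigenvectorUnitary
    have hspec : M = U * diagonal lam * Uᵀ := by
      rw [hU, ← Matrix.conjTranspose_eq_transpose_of_trivial]
      convert hH.spectral_theorem using 3
      rw [Unitary.conjStarAlgAut_apply]; rfl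
    -- column facts
    set col : Fin d → Fin d → ℝ := fun i a => U a i with hcol
    have hcol_sq : ∀ i, ∑ a, (U a i)^2 = 1 := by
      intro i
      have h := congrFun (congrFun hUtU i) i
      simp only [Matrix.mul_apply, Matrix.transpose_apply, Matrix.one_apply_eq] at h
      calc ∑ a, (U a i)^2 = ∑ a, U a i * U a i :=
            Finset.sum_congr rfl fun a _ => sq (U a i)
        _ = 1 := h
    have hcol_vnorm : ∀ i, vnorm (col i) = 1 := by
      intro i
      unfold vnorm
      rw [show ∑ a, (col i a)^2 = 1 from hcol_sq i]
      exact Real.sqrt_one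
    have hcol_entry : ∀ i a, |U a i| ≤ 1 := by
      intro i a
      have h1 : (U a i)^2 ≤ 1 := by
        rw [← hcol_sq i]
        exact Finset.single_le_sum (f := fun a => (U a i)^2) (fun b _ => sq_nonneg _)
          (Finset.mem_univ a)
      rw [← Real.sqrt_one, ← Real.sqrt_sq_eq_abs]
      exact Real.sqrt_le_sqrt h1
    -- eigenvalue sums
    have hfrob_sq : ∑ i, ∑ j, (M i j)^2 ≤ ρ^2 := by
      have h := hMfrob
      unfold frobNorm at h
      have hnn : (0:ℝ) ≤ ∑ i, ∑ j, (M i j)^2 :=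
        Finset.sum_nonneg fun i _ => Finset.sum_nonneg fun j _ => sq_nonneg _
      calc ∑ i, ∑ j, (M i j)^2 = (Real.sqrt (∑ i, ∑ j, (M i j)^2))^2 :=
            (Real.sq_sqrt hnn).symm
        _ ≤ ρ^2 := pow_le_pow_left₀ (Real.sqrt_nonneg _) h 2
    have hlam_sq : ∑ i, (lam i)^2 ≤ ρ^2 := by
      rw [trace_sq hMsymm hUtU hspec]; exact hfrob_sq
    have hlam_le : ∀ i, |lam i| ≤ ρ := by
      intro i
      have h1 : (lam i)^2 ≤ ρ^2 :=
        le_trans (Finset.single_le_sum (f := fun i => (lam i)^2)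
          (fun b _ => sq_nonneg _) (Finset.mem_univ i)) hlam_sq
      rw [← Real.sqrt_sq_eq_abs, ← Real.sqrt_sq hρ0.le]
      exact Real.sqrt_le_sqrt h1
    -- top-ℓ selection
    obtain ⟨S, hScard, hStop⟩ := exists_top (fun i => (lam i)^2) ℓ hld
    have hsqrtℓ : (0:ℝ) < Real.sqrt ℓ := Real.sqrt_pos.mpr (by exact_mod_cast hl1)
    have htail : ∀ i ∉ S, |lam i| ≤ ρ / Real.sqrt ℓ := by
      intro i hi
      have h1 : (ℓ:ℝ) * (lam i)^2 ≤ ∑ j ∈ S, (lam j)^2 := by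
        have h := Finset.card_nsmul_le_sum S (fun j => (lam j)^2) ((lam i)^2)
          (fun j hj => hStop i hi j hj)
        rw [hScard] at h
        simpa [nsmul_eq_mul] using h
      have h2 : ∑ j ∈ S, (lam j)^2 ≤ ρ^2 := by
        apply le_trans _ hlam_sq
        exact Finset.sum_le_sum_of_subset_of_nonneg (Finset.subset_univ S)
          (fun j _ _ => sq_nonneg _)
      have hℓ0 : (0:ℝ) < ℓ := by exact_mod_cast hl1
      have h3 : (lam i)^2 ≤ ρ^2 / ℓ := by
        rw [le_div_iff₀ hℓ0]; nlinarith
      rw [← Real.sqrt_sq_eq_abs]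
      rw [show ρ / Real.sqrt ℓ = Real.sqrt (ρ^2 / ℓ) by
        rw [Real.sqrt_div (sq_nonneg ρ), Real.sqrt_sq hρ0.le]]
      exact Real.sqrt_le_sqrt h3
    -- split M
    set wS : Fin d → ℝ := fun i => if i ∈ S then lam i else 0 with hwS
    set wT : Fin d → ℝ := fun i => if i ∈ S then 0 else lam i with hwT
    have hsplit : M = U * diagonal wS * Uᵀ + U * diagonal wT * Uᵀ := by
      conv_lhs => rw [hspec]
      have hfun : lam = fun i => wS i + wT i := by
        funext i
        by_cases h : i ∈ S <;> simp [hwS, hwT, h]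
      have hdiag : diagonal lam = diagonal wS + diagonal wT := by
        rw [Matrix.diagonal_add, ← hfun]
      rw [hdiag, Matrix.mul_add, Matrix.add_mul]
    have htailop : opNorm (U * diagonal wT * Uᵀ) ≤ ρ / Real.sqrt ℓ := by
      apply opNorm_conj_diag_le hUtU hUUt (by positivity)
      intro i
      by_cases h : i ∈ S
      · rw [hwT]; simp only [h, if_true, abs_zero]; positivity
      · rw [hwT]; simp only [h, if_false]; exact htail i h
    -- the enumeration of S
    set g : Fin ℓ → Fin d := fun k => ((S.orderIsoOfFin hScard k : S) : Fin d) with hg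
    have hgmem : ∀ k, g k ∈ S := fun k => (S.orderIsoOfFin hScard k).2
    -- rounded data
    set a : Fin ℓ → ℝ := fun k =>
      (round (lam (g k) / (1/(d:ℝ)^5)) : ℝ) * (1/(d:ℝ)^5) with ha
    set v : Fin ℓ → Fin d → ℝ := fun k b =>
      (round (col (g k) b / (1/(d:ℝ)^7)) : ℝ) * (1/(d:ℝ)^7) with hv
    set p : Fin ℓ → ℝ × (Fin d → ℝ) := fun k => (a k, v k) with hp
    -- membership
    have hpmem : p ∈ P := by
      rw [hP, Fintype.mem_piFinset]
      intro k
      rw [Finset.mem_product]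
      constructor
      · rw [hGa]
        apply mem_gridZ hd5 (hlam_le (g k))
        rw [show ρ/(1/(d:ℝ)^5) = ρ*(d:ℝ)^5 by field_simp]
        push_cast
        nlinarith [pow_pos hD0 5, pow_pos hD0 6,
          mul_le_mul_of_nonneg_right hρd (le_of_lt (pow_pos hD0 5))]
      · rw [Fintype.mem_piFinset]
        intro b
        rw [hGc]
        apply mem_gridZ hd7 (hcol_entry (g k) b)
        rw [show (1:ℝ)/(1/(d:ℝ)^7) = (d:ℝ)^7 by field_simp]
        push_cast
        linarith
    -- error bounds for rounding
    have haerr : ∀ k, |lam (g k) - a k| ≤ 1/(d:ℝ)^5 := by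
      intro k
      calc |lam (g k) - a k| ≤ (1/(d:ℝ)^5)/2 := round_close _ _ hd5
        _ ≤ 1/(d:ℝ)^5 := by linarith
    have hverr : ∀ k, vnorm (col (g k) - v k) ≤ 1/(d:ℝ)^6 := by
      intro k
      have hb : ∀ b, ((col (g k) - v k) b)^2 ≤ (1/(d:ℝ)^7)^2 := by
        intro b
        have h1 : |col (g k) b - v k b| ≤ (1/(d:ℝ)^7)/2 := round_close _ _ hd7
        have h2 : |(col (g k) - v k) b| ≤ 1/(d:ℝ)^7 := by
          rw [Pi.sub_apply]; linarith
        calc ((col (g k) - v k) b)^2 = |(col (g k) - v k) b|^2 := (sq_abs _).symm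
          _ ≤ (1/(d:ℝ)^7)^2 := pow_le_pow_left₀ (abs_nonneg _) h2 2
      have hsum : ∑ b, ((col (g k) - v k) b)^2 ≤ (d:ℝ) * (1/(d:ℝ)^7)^2 := by
        calc ∑ b, ((col (g k) - v k) b)^2 ≤ ∑ _b : Fin d, (1/(d:ℝ)^7)^2 :=
              Finset.sum_le_sum fun b _ => hb b
          _ = (d:ℝ) * (1/(d:ℝ)^7)^2 := by
              rw [Finset.sum_const, Finset.card_univ, Fintype.card_fin, nsmul_eq_mul]
      have hfin : (d:ℝ) * (1/(d:ℝ)^7)^2 ≤ (1/(d:ℝ)^6)^2 := by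
        have e1 : (d:ℝ) * (1/(d:ℝ)^7)^2 = 1/(d:ℝ)^13 := by
          field_simp
        have e2 : ((1:ℝ)/(d:ℝ)^6)^2 = 1/(d:ℝ)^12 := by
          field_simp
        rw [e1, e2]
        apply one_div_le_one_div_of_le (by positivity)
        exact pow_le_pow_right₀ hD1 (by norm_num)
      unfold vnorm
      calc Real.sqrt (∑ b, ((col (g k) - v k) b)^2) ≤ Real.sqrt ((1/(d:ℝ)^6)^2) :=
            Real.sqrt_le_sqrt (le_trans hsum hfin)
        _ = 1/(d:ℝ)^6 := Real.sqrt_sq (by positivity)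
    have hvnormv : ∀ k, vnorm (v k) ≤ 2 := by
      intro k
      have e : v k = col (g k) + (-(col (g k) - v k)) := by
        funext b
        simp only [Pi.add_apply, Pi.neg_apply, Pi.sub_apply]
        ring
      rw [e]
      calc vnorm (col (g k) + (-(col (g k) - v k)))
          ≤ vnorm (col (g k)) + vnorm (-(col (g k) - v k)) := vnorm_triangle _ _
        _ = 1 + vnorm (col (g k) - v k) := by
            rw [hcol_vnorm]
            congr 1
            unfold vnorm
            congr 1
            exact Finset.sum_congr rfl fun b _ => by rw [Pi.neg_apply, neg_sq]
        _ ≤ 1 + 1/(d:ℝ)^6 := by linarith [hverr k]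
        _ ≤ 2 := by
            have : 1/(d:ℝ)^6 ≤ 1 := by
              rw [div_le_one (by positivity)]; exact h1d6
            linarith
    have habs_a : ∀ k, |a k| ≤ (d:ℝ) := by
      intro k
      have h1 : |a k| ≤ |lam (g k)| + |lam (g k) - a k| := by
        have t := abs_sub_abs_le_abs_sub (a k) (lam (g k))
        rw [abs_sub_comm] at t
        linarith
      have h15 : 1/(d:ℝ)^5 ≤ 1 := by
        rw [div_le_one (by positivity)]
        calc (1:ℝ) ≤ (d:ℝ) := hD1
          _ ≤ (d:ℝ)^5 := le_self_pow₀ hD1 (by norm_num)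
      calc |a k| ≤ |lam (g k)| + |lam (g k) - a k| := h1
        _ ≤ ρ + 1/(d:ℝ)^5 := add_le_add (hlam_le _) (haerr k)
        _ ≤ 0.1*(d:ℝ) + 1 := by
            have : ρ ≤ 0.1 * (d:ℝ) := by nlinarith [Real.sqrt_nonneg (d:ℝ)]
            linarith
        _ ≤ (d:ℝ) := by nlinarith
    -- per-term bounds
    have hterm : ∀ k : Fin ℓ,
        opNorm (vecMulVec (lam (g k) • col (g k)) (col (g k))
          - vecMulVec (a k • v k) (v k)) ≤ 4/(d:ℝ)^5 := by
      intro k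
      have hdecomp : vecMulVec (lam (g k) • col (g k)) (col (g k))
          - vecMulVec (a k • v k) (v k)
          = vecMulVec ((lam (g k) - a k) • col (g k)) (col (g k))
          + vecMulVec (a k • (col (g k) - v k)) (col (g k))
          + vecMulVec (a k • v k) (col (g k) - v k) := by
        ext i j
        simp only [Matrix.sub_apply, Matrix.add_apply, vecMulVec_apply, Pi.smul_apply,
          Pi.sub_apply, smul_eq_mul]
        ring
      rw [hdecomp]
      have t1 : opNorm (vecMulVec ((lam (g k) - a k) • col (g k)) (col (g k)))
          ≤ 1/(d:ℝ)^5 := by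
        apply le_trans (opNorm_vecMulVec _ _)
        rw [vnorm_smul, hcol_vnorm]
        calc |lam (g k) - a k| * 1 * 1 = |lam (g k) - a k| := by ring
          _ ≤ 1/(d:ℝ)^5 := haerr k
      have t2 : opNorm (vecMulVec (a k • (col (g k) - v k)) (col (g k)))
          ≤ 1/(d:ℝ)^5 := by
        apply le_trans (opNorm_vecMulVec _ _)
        rw [vnorm_smul, hcol_vnorm]
        have h := mul_le_mul (habs_a k) (hverr k) (vnorm_nonneg _) hD0.le
        calc |a k| * vnorm (col (g k) - v k) * 1
            = |a k| * vnorm (col (g k) - v k) := by ring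
          _ ≤ (d:ℝ) * (1/(d:ℝ)^6) := h
          _ = 1/(d:ℝ)^5 := by field_simp
      have t3 : opNorm (vecMulVec (a k • v k) (col (g k) - v k))
          ≤ 2/(d:ℝ)^5 := by
        apply le_trans (opNorm_vecMulVec _ _)
        rw [vnorm_smul]
        have h1 : |a k| * vnorm (v k) ≤ (d:ℝ) * 2 :=
          mul_le_mul (habs_a k) (hvnormv k) (vnorm_nonneg _) hD0.le
        calc |a k| * vnorm (v k) * vnorm (col (g k) - v k)
            ≤ ((d:ℝ) * 2) * (1/(d:ℝ)^6) := by
              apply mul_le_mul h1 (hverr k) (vnorm_nonneg _) (by positivity)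
          _ = 2/(d:ℝ)^5 := by field_simp
      calc opNorm (vecMulVec ((lam (g k) - a k) • col (g k)) (col (g k))
            + vecMulVec (a k • (col (g k) - v k)) (col (g k))
            + vecMulVec (a k • v k) (col (g k) - v k))
          ≤ opNorm (vecMulVec ((lam (g k) - a k) • col (g k)) (col (g k))
            + vecMulVec (a k • (col (g k) - v k)) (col (g k)))
            + opNorm (vecMulVec (a k • v k) (col (g k) - v k)) := opNorm_add_le _ _
        _ ≤ opNorm (vecMulVec ((lam (g k) - a k) • col (g k)) (col (g k)))
            + opNorm (vecMulVec (a k • (col (g k) - v k)) (col (g k)))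
            + opNorm (vecMulVec (a k • v k) (col (g k) - v k)) := by
              linarith [opNorm_add_le (vecMulVec ((lam (g k) - a k) • col (g k)) (col (g k)))
                (vecMulVec (a k • (col (g k) - v k)) (col (g k)))]
        _ ≤ 1/(d:ℝ)^5 + 1/(d:ℝ)^5 + 2/(d:ℝ)^5 := by linarith
        _ = 4/(d:ℝ)^5 := by ring
    -- identification of the truncated matrix as a sum over Fin ℓ
    have hMS : U * diagonal wS * Uᵀ
        = ∑ k : Fin ℓ, vecMulVec (lam (g k) • col (g k)) (col (g k)) := by
      rw [spec_decomp U wS]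
      have h1 : ∑ i, vecMulVec (wS i • col i) (col i)
          = ∑ i ∈ S, vecMulVec (wS i • col i) (col i) := by
        symm
        apply Finset.sum_subset (Finset.subset_univ S)
        intro i _ hi
        have : wS i = 0 := by rw [hwS]; simp [hi]
        rw [this]
        ext x y
        simp [vecMulVec_apply]
      have h2 : ∑ i ∈ S, vecMulVec (wS i • col i) (col i)
          = ∑ i ∈ S, vecMulVec (lam i • col i) (col i) := by
        apply Finset.sum_congr rfl
        intro i hi
        have : wS i = lam i := by rw [hwS]; simp [hi]
        rw [this]
      rw [h1, h2]
      rw [← Finset.sum_coe_sort S (fun i => vecMulVec (lam i • col i) (col i))]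
      rw [← Equiv.sum_comp (S.orderIsoOfFin hScard).toEquiv
        (fun s : S => vecMulVec (lam (s:Fin d) • col (s:Fin d)) (col (s:Fin d)))]
      rfl
    -- conclusion
    refine ⟨net p, Finset.mem_image_of_mem net hpmem, ?_⟩
    have hnetp : net p = ∑ k : Fin ℓ, vecMulVec (a k • v k) (v k) := rfl
    have hdiff : M - net p = (U * diagonal wT * Uᵀ)
        + ∑ k : Fin ℓ, (vecMulVec (lam (g k) • col (g k)) (col (g k))
            - vecMulVec (a k • v k) (v k)) := by
      rw [Finset.sum_sub_distrib, ← hMS, hnetp]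
      conv_lhs => rw [hsplit]
      abel
    rw [hdiff]
    have hsumbound : opNorm (∑ k : Fin ℓ,
        (vecMulVec (lam (g k) • col (g k)) (col (g k)) - vecMulVec (a k • v k) (v k)))
        ≤ ρ / Real.sqrt ℓ := by
      apply le_trans (opNorm_sum_le _)
      have h1 : ∑ _k : Fin ℓ, (4/(d:ℝ)^5) = (ℓ:ℝ) * (4/(d:ℝ)^5) := by
        rw [Finset.sum_const, Finset.card_univ, Fintype.card_fin, nsmul_eq_mul]
      calc ∑ k : Fin ℓ, opNorm (vecMulVec (lam (g k) • col (g k)) (col (g k))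
            - vecMulVec (a k • v k) (v k))
          ≤ ∑ _k : Fin ℓ, (4/(d:ℝ)^5) := Finset.sum_le_sum fun k _ => hterm k
        _ = (ℓ:ℝ) * (4/(d:ℝ)^5) := h1
        _ ≤ (d:ℝ) * (4/(d:ℝ)^5) := by
            apply mul_le_mul_of_nonneg_right _ (by positivity)
            exact_mod_cast hld
        _ = 4/(d:ℝ)^4 := by field_simp
        _ ≤ 1/(d:ℝ)^2 := by
            rw [div_le_div_iff₀ (by positivity) (by positivity)]
            nlinarith [mul_le_mul_of_nonneg_left h4d2 (le_of_lt (pow_pos hD0 2))]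
        _ ≤ ρ / Real.sqrt ℓ := by
            have hsl : Real.sqrt ℓ ≤ (d:ℝ) := by
              have h1 : Real.sqrt ℓ ≤ Real.sqrt d := by
                apply Real.sqrt_le_sqrt; exact_mod_cast hld
              linarith
            have hdρ : 1 ≤ ρ * (d:ℝ) := (div_le_iff₀ hD0).mp hρ1
            have hstep1 : 1/(d:ℝ)^2 ≤ ρ/(d:ℝ) := by
              rw [div_le_div_iff₀ (by positivity) hD0]
              nlinarith [mul_le_mul_of_nonneg_right hdρ hD0.le]
            have hstep2 : ρ/(d:ℝ) ≤ ρ/Real.sqrt ℓ :=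
              div_le_div_of_nonneg_left hρ0.le hsqrtℓ hsl
            exact le_trans hstep1 hstep2
    calc opNorm ((U * diagonal wT * Uᵀ)
        + ∑ k : Fin ℓ, (vecMulVec (lam (g k) • col (g k)) (col (g k))
            - vecMulVec (a k • v k) (v k)))
        ≤ opNorm (U * diagonal wT * Uᵀ)
          + opNorm (∑ k : Fin ℓ, (vecMulVec (lam (g k) • col (g k)) (col (g k))
            - vecMulVec (a k • v k) (v k))) := opNorm_add_le _ _
      _ ≤ ρ / Real.sqrt ℓ + ρ / Real.sqrt ℓ := add_le_add htailop hsumbound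
      _ = 2 * ρ / Real.sqrt ℓ := by ring

end
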